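/- Extreme path event III (Lemma 3.2, (14)): Assume sup_{t∈[0,T]} E[|L(Y_t)|^p] < ∞ for some p>1, and let η∈(0,1). Then for every q with 0<q<pη, sup_{0≤i≤2^ℓ−1} ℙ( ∫_{t_i^ℓ}^{t_{i+1}^ℓ} |L(Y_s)| ds > h_ℓ^{1−η} ) = o(h_ℓ^q) as ℓ→∞, where h_ℓ = 2^{−ℓ}T and t_i^ℓ = i·h_ℓ. -/

import Mathlib

open MeasureTheory ProbabilityTheory Filter Set

noncomputable section

/-- `W` is a standard one-dimensional Brownian motion under `P`. -/
def IsStandardBM {Ω : Type*} [MeasurableSpace Ω] (P : Measure Ω) (W : ℝ → Ω → ℝ) : Prop :=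
  (∀ t, Measurable (W t)) ∧
  (∀ ω, W 0 ω = 0) ∧
  (∀ ω, Continuous fun t => W t ω) ∧
  (∀ s t : ℝ, 0 ≤ s → s ≤ t →
    Measure.map (fun ω => W t ω - W s ω) P = gaussianReal 0 (Real.toNNReal (t - s))) ∧
  (∀ (n : ℕ) (t : Fin (n + 1) → ℝ), Monotone t → (∀ i, 0 ≤ t i) →
    iIndepFun
      (fun i : Fin n => fun ω => W (t i.succ) ω - W (t i.castSucc) ω) P)

/-- Lemma 3.2, (14): extreme path event III. -/
theorem extreme_path_event_III
    {Ω : Type*} [MeasurableSpace Ω] (P : Measure Ω) [IsProbabilityMeasure P]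
    (T γ y : ℝ) (hT : 0 < T) (hγ : γ ≠ 0) (hy : 0 < y)
    (L : ℝ → ℝ) (hL : ContDiffOn ℝ 2 L (Set.Ioi 0))
    (W : ℝ → Ω → ℝ) (hW : IsStandardBM P W)
    (Y : ℝ → Ω → ℝ)
    (hYmeas : ∀ t, Measurable (Y t))
    (hYpos : ∀ t ∈ Set.Icc (0 : ℝ) T, ∀ ω, 0 < Y t ω)
    (hYcont : ∀ ω, ContinuousOn (fun t => Y t ω) (Set.Icc 0 T))
    (hYsde : ∀ᵐ ω ∂P, ∀ t ∈ Set.Icc (0 : ℝ) T,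
      Y t ω = y + (∫ s in (0 : ℝ)..t, L (Y s ω)) + γ * W t ω)
    (p : ℝ) (hp : 1 < p)
    (hLmom : (⨆ t ∈ Set.Icc (0 : ℝ) T,
        ∫⁻ ω, (ENNReal.ofReal |L (Y t ω)|) ^ p ∂P) < ⊤)
    (η : ℝ) (hη : η ∈ Set.Ioo (0 : ℝ) 1) :
    ∀ q : ℝ, 0 < q → q < p * η →
      Tendsto (fun ℓ : ℕ =>
        (⨆ i ∈ Finset.range (2 ^ ℓ),
          (P {ω | ENNReal.ofReal ((T / 2 ^ ℓ) ^ (1 - η)) <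
              ∫⁻ s in Set.Icc ((i : ℝ) * (T / 2 ^ ℓ)) (((i : ℝ) + 1) * (T / 2 ^ ℓ)),
                ENNReal.ofReal |L (Y s ω)|}).toReal)
          / (T / 2 ^ ℓ) ^ q) atTop (nhds 0) := by
  obtain ⟨hη0, hη1⟩ := hη
  intro q hq hqp
  have hp0 : (0:ℝ) < p := lt_trans one_pos hp
  set M : ENNReal := ⨆ t ∈ Set.Icc (0 : ℝ) T,
      ∫⁻ ω, (ENNReal.ofReal |L (Y t ω)|) ^ p ∂P with hMdef
  have hMne : M ≠ ⊤ := hLmom.ne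
  -- clamping function
  set c : ℝ → ℝ := fun t => min (max t 0) T with hc
  have hcmem : ∀ t, c t ∈ Set.Icc (0:ℝ) T := fun t =>
    ⟨le_min (le_max_right t 0) hT.le, min_le_right _ _⟩
  have hccont : Continuous c := (continuous_id.max continuous_const).min continuous_const
  have hceq : ∀ t ∈ Set.Icc (0:ℝ) T, c t = t := fun t ht => by
    simp only [hc, max_eq_left ht.1, min_eq_left ht.2]
  -- the clamped process and L composed with it
  set Z : ℝ → Ω → ℝ := fun t ω => Y (c t) ω with hZ
  have hZpos : ∀ t ω, 0 < Z t ω := fun t ω => hYpos _ (hcmem t) ω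
  set g : ℝ → Ω → ℝ := fun t ω => L (Z t ω) with hg
  have hLres : Continuous ((Set.Ioi (0:ℝ)).restrict L) :=
    continuousOn_iff_continuous_restrict.mp hL.continuousOn
  have hgmeas1 : ∀ t, Measurable (g t) := by
    intro t
    have h1 : Measurable fun ω => (⟨Z t ω, hZpos t ω⟩ : Set.Ioi (0:ℝ)) :=
      (hYmeas (c t)).subtype_mk
    exact hLres.measurable.comp h1
  have hgcont : ∀ ω, Continuous fun t => g t ω := by
    intro ω
    have hZc : Continuous fun t => Z t ω :=
      (hYcont ω).comp_continuous hccont hcmem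
    exact hL.continuousOn.comp_continuous hZc fun t => hZpos t ω
  have hgmeas : Measurable (Function.uncurry g) :=
    measurable_uncurry_of_continuous_of_measurable hgcont hgmeas1
  set F : ℝ → Ω → ENNReal := fun s ω => ENNReal.ofReal |g s ω| with hF
  have hFmeas : Measurable (Function.uncurry F) := hgmeas.abs.ennreal_ofReal
  have hFswap : Measurable (Function.uncurry fun (ω : Ω) (s : ℝ) => F s ω) :=
    hFmeas.comp measurable_swap
  -- key pointwise-in-(ℓ, i) bound
  have key : ∀ (ℓ i : ℕ), i < 2 ^ ℓ →
      (P {ω | ENNReal.ofReal ((T / 2 ^ ℓ) ^ (1 - η)) <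
          ∫⁻ s in Set.Icc ((i : ℝ) * (T / 2 ^ ℓ)) (((i : ℝ) + 1) * (T / 2 ^ ℓ)),
            ENNReal.ofReal |L (Y s ω)|}).toReal ≤ M.toReal * (T / 2 ^ ℓ) ^ (p * η) := by
    intro ℓ i hi
    set h : ℝ := T / 2 ^ ℓ with hh
    have hhpos : 0 < h := by
      have : (0:ℝ) < 2 ^ ℓ := by positivity
      exact div_pos hT this
    set a : ℝ := (i : ℝ) * h with ha
    set b : ℝ := ((i : ℝ) + 1) * h with hb
    have hIsub : Set.Icc a b ⊆ Set.Icc 0 T := by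
      intro s hs
      refine ⟨le_trans (by positivity) hs.1, hs.2.trans ?_⟩
      have h1 : ((i : ℝ) + 1) ≤ (2:ℝ) ^ ℓ := by
        have := Nat.succ_le_of_lt hi
        exact_mod_cast this
      have h2 : b ≤ (2:ℝ) ^ ℓ * h := by
        rw [hb]
        exact mul_le_mul_of_nonneg_right h1 hhpos.le
      refine h2.trans_eq ?_
      rw [hh]
      field_simp
    have hvol : volume (Set.Icc a b) = ENNReal.ofReal h := by
      rw [Real.volume_Icc]
      congr 1
      rw [ha, hb]; ring
    -- rewrite the event integral via F
    have hAint : ∀ ω, (∫⁻ s in Set.Icc a b, ENNReal.ofReal |L (Y s ω)|)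
        = ∫⁻ s in Set.Icc a b, F s ω := by
      intro ω
      refine setLIntegral_congr_fun measurableSet_Icc (fun s hs => ?_) |>.symm
      simp only [hF, hg, hZ, hceq s (hIsub hs)]
    set A : Ω → ENNReal := fun ω => ∫⁻ s in Set.Icc a b, F s ω with hA
    set X : Ω → ENNReal := fun ω => ∫⁻ s in Set.Icc a b, (F s ω) ^ p with hX
    have hAmeas : Measurable A :=
      Measurable.lintegral_prod_right (f := fun ω s => F s ω) hFswap
    have hXmeas : Measurable X :=
      Measurable.lintegral_prod_right (f := fun ω s => (F s ω) ^ p) (hFswap.pow_const p)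
    have hconj : p.HolderConjugate (Real.conjExponent p) := Real.HolderConjugate.conjExponent hp
    have hone : (1 / Real.conjExponent p) * p = p - 1 := by
      rw [Real.conjExponent]
      have h1 : p - 1 ≠ 0 := by linarith
      field_simp
    -- Hölder pointwise in ω
    have hAb : ∀ ω, A ω ^ p ≤ X ω * (ENNReal.ofReal h) ^ (p - 1) := by
      intro ω
      have hFsm : Measurable fun s => F s ω := by
        have : Continuous fun s => F s ω :=
          ENNReal.continuous_ofReal.comp (hgcont ω).abs
        exact this.measurable
      have hHolder := ENNReal.lintegral_mul_le_Lp_mul_Lq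
        ((volume : Measure ℝ).restrict (Set.Icc a b)) hconj
        hFsm.aemeasurable (aemeasurable_const (b := (1 : ENNReal)))
      have hA1 : A ω ≤ (X ω) ^ (1/p) * (ENNReal.ofReal h) ^ (1 / Real.conjExponent p) := by
        refine le_trans (le_of_eq ?_) (hHolder.trans (le_of_eq ?_))
        · simp only [hA, Pi.mul_apply, mul_one]
        · congr 1
          rw [show (∫⁻ s in Set.Icc a b, (1:ENNReal) ^ Real.conjExponent p ∂volume)
              = ENNReal.ofReal h from by simp [hvol]]
      calc A ω ^ p ≤ ((X ω) ^ (1/p) * (ENNReal.ofReal h) ^ (1 / Real.conjExponent p)) ^ p :=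
            ENNReal.rpow_le_rpow hA1 hp0.le
        _ = (X ω) ^ ((1/p) * p) * (ENNReal.ofReal h) ^ ((1 / Real.conjExponent p) * p) := by
            rw [ENNReal.mul_rpow_of_nonneg _ _ hp0.le, ← ENNReal.rpow_mul, ← ENNReal.rpow_mul]
        _ = X ω * (ENNReal.ofReal h) ^ (p - 1) := by
            rw [one_div, inv_mul_cancel₀ hp0.ne', ENNReal.rpow_one, hone]
    have hne0 : ENNReal.ofReal h ≠ 0 := by
      simp [ENNReal.ofReal_eq_zero, not_le, hhpos]
    have hnet : ENNReal.ofReal h ≠ ⊤ := ENNReal.ofReal_ne_top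
    -- integrate in ω, swap and bound
    have hXint : ∫⁻ ω, X ω ∂P ≤ M * ENNReal.ofReal h := by
      have hswap : ∫⁻ ω, X ω ∂P = ∫⁻ s in Set.Icc a b, ∫⁻ ω, (F s ω) ^ p ∂P ∂volume := by
        simp only [hX]
        exact lintegral_lintegral_swap ((hFswap.pow_const p).aemeasurable)
      rw [hswap]
      have hinner : ∀ s ∈ Set.Icc a b, (∫⁻ ω, (F s ω) ^ p ∂P) ≤ M := by
        intro s hs
        have hsIcc := hIsub hs
        have heq : (fun ω => (F s ω) ^ p) = fun ω => (ENNReal.ofReal |L (Y s ω)|) ^ p := by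
          funext ω
          simp only [hF, hg, hZ, hceq s hsIcc]
        rw [heq, hMdef]
        exact le_iSup₂ (f := fun t (_ : t ∈ Set.Icc (0:ℝ) T) =>
          ∫⁻ ω, (ENNReal.ofReal |L (Y t ω)|) ^ p ∂P) s hsIcc
      calc (∫⁻ s in Set.Icc a b, ∫⁻ ω, (F s ω) ^ p ∂P ∂volume)
          ≤ ∫⁻ _ in Set.Icc a b, M ∂volume := setLIntegral_mono measurable_const hinner
        _ = M * ENNReal.ofReal h := by rw [setLIntegral_const, hvol]
    have hIntA : ∫⁻ ω, A ω ^ p ∂P ≤ M * ENNReal.ofReal h ^ p := by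
      calc ∫⁻ ω, A ω ^ p ∂P ≤ ∫⁻ ω, X ω * (ENNReal.ofReal h) ^ (p - 1) ∂P :=
            lintegral_mono fun ω => hAb ω
        _ = (∫⁻ ω, X ω ∂P) * (ENNReal.ofReal h) ^ (p - 1) := lintegral_mul_const _ hXmeas
        _ ≤ (M * ENNReal.ofReal h) * (ENNReal.ofReal h) ^ (p - 1) := by
            exact mul_le_mul_left hXint _
        _ = M * ENNReal.ofReal h ^ p := by
            rw [mul_assoc]
            congr 1
            calc ENNReal.ofReal h * ENNReal.ofReal h ^ (p - 1)
                = ENNReal.ofReal h ^ (1:ℝ) * ENNReal.ofReal h ^ (p - 1) := by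
                  rw [ENNReal.rpow_one]
              _ = ENNReal.ofReal h ^ ((1:ℝ) + (p - 1)) :=
                  (ENNReal.rpow_add _ _ hne0 hnet).symm
              _ = ENNReal.ofReal h ^ p := by norm_num
    -- Markov
    set ε : ENNReal := ENNReal.ofReal (h ^ (1 - η)) with hε
    have hεppos : (0:ℝ) < h ^ (1 - η) := Real.rpow_pos_of_pos hhpos _
    have hεp : ε ^ p = ENNReal.ofReal (h ^ ((1 - η) * p)) := by
      rw [hε, ENNReal.ofReal_rpow_of_pos hεppos, ← Real.rpow_mul hhpos.le]
    have hmarkov : ε ^ p * P {ω | ε ^ p ≤ A ω ^ p} ≤ ∫⁻ ω, A ω ^ p ∂P :=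
      mul_meas_ge_le_lintegral₀ ((hAmeas.pow_const p).aemeasurable) _
    have hsub : {ω | ε < ∫⁻ s in Set.Icc a b, ENNReal.ofReal |L (Y s ω)|}
        ⊆ {ω | ε ^ p ≤ A ω ^ p} := by
      intro ω hω
      have h1 : ε ≤ A ω := le_of_lt (hω.trans_le (hAint ω).le)
      exact ENNReal.rpow_le_rpow h1 hp0.le
    have hεpne0 : ε ^ p ≠ 0 := by
      rw [hεp]
      simp [ENNReal.ofReal_eq_zero, not_le, Real.rpow_pos_of_pos hhpos]
    have hεpnet : ε ^ p ≠ ⊤ := by rw [hεp]; exact ENNReal.ofReal_ne_top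
    have hPbound : P {ω | ε < ∫⁻ s in Set.Icc a b, ENNReal.ofReal |L (Y s ω)|}
        ≤ M * ENNReal.ofReal (h ^ (p * η)) := by
      rw [← ENNReal.mul_le_mul_iff_left hεpne0 hεpnet]
      calc P {ω | ε < ∫⁻ s in Set.Icc a b, ENNReal.ofReal |L (Y s ω)|} * ε ^ p
          ≤ P {ω | ε ^ p ≤ A ω ^ p} * ε ^ p :=
            mul_le_mul_left (measure_mono hsub) _
        _ = ε ^ p * P {ω | ε ^ p ≤ A ω ^ p} := mul_comm _ _
        _ ≤ ∫⁻ ω, A ω ^ p ∂P := hmarkov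
        _ ≤ M * ENNReal.ofReal h ^ p := hIntA
        _ = M * ENNReal.ofReal (h ^ (p * η)) * ε ^ p := by
            rw [hεp, ENNReal.ofReal_rpow_of_pos hhpos]
            rw [mul_assoc, ← ENNReal.ofReal_mul (Real.rpow_nonneg hhpos.le _)]
            congr 2
            rw [← Real.rpow_add hhpos]
            congr 1
            ring
    have hfin : M * ENNReal.ofReal (h ^ (p * η)) ≠ ⊤ :=
      ENNReal.mul_ne_top hMne ENNReal.ofReal_ne_top
    have := ENNReal.toReal_mono hfin hPbound
    rwa [ENNReal.toReal_mul, ENNReal.toReal_ofReal (Real.rpow_nonneg hhpos.le _)] at this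
  -- conclude via squeeze
  set e : ℝ := p * η - q with he
  have he0 : 0 < e := sub_pos.mpr hqp
  apply squeeze_zero (g := fun ℓ : ℕ => M.toReal * (T / 2 ^ ℓ) ^ e)
  · intro ℓ
    apply div_nonneg
    · exact Real.iSup_nonneg fun i => Real.iSup_nonneg fun _ => ENNReal.toReal_nonneg
    · exact Real.rpow_nonneg (by positivity) q
  · intro ℓ
    have hhpos : (0:ℝ) < T / 2 ^ ℓ := by positivity
    rw [div_le_iff₀ (Real.rpow_pos_of_pos hhpos q)]
    have hBeq : M.toReal * (T / 2 ^ ℓ) ^ e * (T / 2 ^ ℓ) ^ q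
        = M.toReal * (T / 2 ^ ℓ) ^ (p * η) := by
      rw [mul_assoc, ← Real.rpow_add hhpos]
      congr 2
      rw [he]; ring
    rw [hBeq]
    have hB0 : 0 ≤ M.toReal * (T / 2 ^ ℓ) ^ (p * η) := by
      apply mul_nonneg ENNReal.toReal_nonneg (Real.rpow_nonneg hhpos.le _)
    refine Real.iSup_le (fun i => Real.iSup_le (fun hi => ?_) hB0) hB0
    exact key ℓ i (Finset.mem_range.mp hi)
  · have h1 : Tendsto (fun ℓ : ℕ => T / 2 ^ ℓ) atTop (nhds 0) := by
      have h2 := (tendsto_pow_atTop_nhds_zero_of_lt_one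
        (by norm_num : (0:ℝ) ≤ 1/2) (by norm_num : (1/2:ℝ) < 1)).const_mul T
      rw [mul_zero] at h2
      refine h2.congr fun ℓ => ?_
      rw [div_pow, one_pow, div_eq_mul_inv, div_eq_mul_inv, one_mul]
    have h2 : Tendsto (fun ℓ : ℕ => (T / 2 ^ ℓ) ^ e) atTop (nhds 0) := by
      have hc := (Real.continuousAt_rpow_const 0 e (Or.inr he0.le)).tendsto.comp h1
      simpa [Function.comp_def, Real.zero_rpow he0.ne'] using hc
    simpa using h2.const_mul M.toReal

end
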